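/- Fix a joint type P_{X̄Ȳ} of sequences of length n over finite alphabets 𝒳, 𝒴, with type class T^n_{X̄Ȳ}, and let T^n_{X̄} be the type class of the marginal. Given a WAK code (φ̃₀ : 𝒳ⁿ → M̃₀, φ̃₂ : 𝒴ⁿ → M̃₂, ψ̃) with log|T^n_{X̄}| ≥ log|M̃₀|, there exists a modified WAK code (φ̂₀ : 𝒳ⁿ → M̂₀, φ̂₂, ψ̂) with log|M̂₀| ≤ log|M̃₀| + log n + log log|𝒳| + 2, M̂₂ = M̃₂, error probability under the uniform distribution on T^n_{X̄Ȳ} no larger than that of the original code, and |φ̂₀⁻¹(m) ∩ T^n_{X̄}| ≤ |T^n_{X̄}|/|M̃₀| for every m ∈ M̂₀. -/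

import Mathlib

open scoped Classical BigOperators
noncomputable section

variable {𝒳 𝒴 : Type} [Fintype 𝒳] [Fintype 𝒴]

/-- the joint type class `T^n_{X̄Ȳ}` of the joint type `Q` (empirical counts). -/
def jointTypeClass (n : ℕ) (Q : 𝒳 × 𝒴 → ℕ) :
    Finset ((Fin n → 𝒳) × (Fin n → 𝒴)) :=
  Finset.univ.filter (fun p => ∀ z : 𝒳 × 𝒴,
    (Finset.univ.filter (fun i : Fin n => (p.1 i, p.2 i) = z)).card = Q z)

/-- the type class `T^n_{X̄}` of the `𝒳`-marginal of the joint type `Q`. -/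
def typeClassX (n : ℕ) (Q : 𝒳 × 𝒴 → ℕ) : Finset (Fin n → 𝒳) :=
  Finset.univ.filter (fun x => ∀ a : 𝒳,
    (Finset.univ.filter (fun i : Fin n => x i = a)).card = ∑ b, Q (a, b))

/-- error probability of the WAK code `(φ0, φ2, ψ)` under the uniform
distribution on the joint type class of `Q`. -/
def errWAK (n : ℕ) (Q : 𝒳 × 𝒴 → ℕ) {M0 M2 : Type}
    (φ0 : (Fin n → 𝒳) → M0) (φ2 : (Fin n → 𝒴) → M2)
    (ψ : M0 × M2 → (Fin n → 𝒴)) : ℝ :=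
  (((jointTypeClass n Q).filter (fun p => ψ (φ0 p.1, φ2 p.2) ≠ p.2)).card : ℝ) /
    ((jointTypeClass n Q).card : ℝ)

lemma marg_mem (n : ℕ) (Q : 𝒳 × 𝒴 → ℕ)
    {p : (Fin n → 𝒳) × (Fin n → 𝒴)} (hp : p ∈ jointTypeClass n Q) :
    p.1 ∈ typeClassX n Q := by
  simp only [jointTypeClass, Finset.mem_filter, Finset.mem_univ, true_and] at hp
  simp only [typeClassX, Finset.mem_filter, Finset.mem_univ, true_and]
  intro a
  rw [Finset.card_eq_sum_card_fiberwise (f := fun i => p.2 i) (t := Finset.univ)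
    (fun x _ => Finset.mem_univ _)]
  refine Finset.sum_congr rfl fun b _ => ?_
  rw [← hp (a, b), Finset.filter_filter]
  refine congrArg Finset.card ?_
  apply Finset.filter_congr
  intro i _
  simp [Prod.ext_iff, and_comm]

/-- balanced WAK code.  Given a WAK code with
`log|T^n_{X̄}| ≥ log|M̃₀|`, there is a modified WAK code (same `M₂`) with
`log|M̂₀| ≤ log|M̃₀| + log n + log log|𝒳| + 2`, error probability on the type
class no larger, and every fiber of the helper encoder intersecting `T^n_{X̄}`
in at most `|T^n_{X̄}|/|M̃₀|` elements. -/
theorem stmt_10 {M0 M2 : Type} [Fintype M0] [Fintype M2] [Nonempty 𝒴]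
    (n : ℕ) (hn : 1 ≤ n) (Q : 𝒳 × 𝒴 → ℕ) (hQ : ∑ z, Q z = n)
    (φ0 : (Fin n → 𝒳) → M0) (φ2 : (Fin n → 𝒴) → M2)
    (ψ : M0 × M2 → (Fin n → 𝒴))
    (hM0 : Real.logb 2 (Fintype.card M0)
            ≤ Real.logb 2 ((typeClassX n Q).card)) :
    ∃ (k : ℕ) (φ0' : (Fin n → 𝒳) → Fin k) (ψ' : Fin k × M2 → (Fin n → 𝒴)),
      Real.logb 2 k ≤ Real.logb 2 (Fintype.card M0) + Real.logb 2 n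
          + Real.logb 2 (Real.logb 2 (Fintype.card 𝒳)) + 2 ∧
      errWAK n Q φ0' φ2 ψ' ≤ errWAK n Q φ0 φ2 ψ ∧
      ∀ m : Fin k,
        (((typeClassX n Q).filter (fun x => φ0' x = m)).card : ℝ)
          ≤ ((typeClassX n Q).card : ℝ) / (Fintype.card M0 : ℝ) := by
  classical
  set T : Finset (Fin n → 𝒳) := typeClassX n Q with hTdef
  set t := T.card with htdef
  set m := Fintype.card M0 with hmdef
  have hlogm : (0:ℝ) ≤ Real.logb 2 m := by
    rcases Nat.eq_zero_or_pos m with h | h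
    · simp [h]
    · exact Real.logb_nonneg (by norm_num) (by exact_mod_cast h)
  have hlogn : (0:ℝ) ≤ Real.logb 2 n :=
    Real.logb_nonneg (by norm_num) (by exact_mod_cast hn)
  have hlogX : (0:ℝ) ≤ Real.logb 2 (Real.logb 2 (Fintype.card 𝒳)) := by
    rcases le_or_gt (Fintype.card 𝒳) 1 with h | h
    · interval_cases h : Fintype.card 𝒳 <;> simp [h]
    · refine Real.logb_nonneg (by norm_num) ?_
      have : (2:ℝ) ≤ (Fintype.card 𝒳 : ℝ) := by exact_mod_cast h
      calc (1:ℝ) = Real.logb 2 2 := (Real.logb_self_eq_one (by norm_num : (1:ℝ) < 2)).symm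
        _ ≤ Real.logb 2 (Fintype.card 𝒳) :=
            Real.logb_le_logb_of_le (by norm_num) (by norm_num) this
  rcases T.eq_empty_or_nonempty with hTe | ⟨x0, hx0⟩
  · -- degenerate case: T empty
    refine ⟨1, fun _ => 0, fun _ => Classical.arbitrary _, ?_, ?_, ?_⟩
    · simp only [Nat.cast_one, Real.logb_one]; linarith
    · have hJ : jointTypeClass n Q = ∅ := by
        rcases Finset.eq_empty_or_nonempty (jointTypeClass n Q) with h | ⟨p, hp⟩
        · exact h
        · exact absurd (marg_mem n Q hp) (by simp [← hTdef, hTe])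
      have : errWAK n Q (fun _ => (0 : Fin 1)) φ2 (fun _ => Classical.arbitrary _) = 0 := by
        simp [errWAK, hJ]
      rw [this]
      exact div_nonneg (Nat.cast_nonneg _) (Nat.cast_nonneg _)
    · intro j
      rw [hTe]
      simp only [Finset.filter_empty, Finset.card_empty, Nat.cast_zero]
      exact div_nonneg (Nat.cast_nonneg _) (Nat.cast_nonneg _)
  · -- main case
    have hM0ne : Nonempty M0 := ⟨φ0 x0⟩
    have hm1 : 1 ≤ m := Fintype.card_pos_iff.mpr hM0ne
    have ht1 : 1 ≤ t := Finset.card_pos.mpr ⟨x0, hx0⟩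
    have hmt : m ≤ t := by
      have h := (Real.logb_le_logb (b := 2) (x := (m:ℝ)) (y := (t:ℝ))
        (by norm_num) (Nat.cast_pos.mpr hm1) (Nat.cast_pos.mpr ht1)).mp hM0
      exact_mod_cast h
    set B := t / m with hBdef
    have hBpos : 0 < B := Nat.one_le_div_iff hm1 |>.mpr hmt
    -- an injective numbering of sequences
    set ord : (Fin n → 𝒳) → ℕ := fun x => ((Fintype.equivFin (Fin n → 𝒳)) x : ℕ) with horddef
    have hord : Function.Injective ord := fun a b h =>
      (Fintype.equivFin _).injective (Fin.val_injective h)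
    -- rank within the φ0-fiber of T, and chunk index
    set rk : (Fin n → 𝒳) → ℕ :=
      fun x => (T.filter (fun y => φ0 y = φ0 x ∧ ord y < ord x)).card with hrkdef
    set ch : (Fin n → 𝒳) → ℕ := fun x => rk x / B with hchdef
    have hrkmono : ∀ x ∈ T, ∀ x' ∈ T, φ0 x = φ0 x' → ord x < ord x' → rk x < rk x' := by
      intro x hx x' hx' hφ hlt
      apply Finset.card_lt_card
      have hsub : T.filter (fun y => φ0 y = φ0 x ∧ ord y < ord x)
          ⊆ T.filter (fun y => φ0 y = φ0 x' ∧ ord y < ord x') := by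
        intro y hy
        simp only [Finset.mem_filter] at hy ⊢
        exact ⟨hy.1, hφ ▸ hy.2.1, hy.2.2.trans hlt⟩
      refine (Finset.ssubset_iff_of_subset hsub).mpr ⟨x, ?_, ?_⟩
      · exact Finset.mem_filter.mpr ⟨hx, hφ, hlt⟩
      · simp only [Finset.mem_filter]
        rintro ⟨-, -, h⟩
        exact absurd h (lt_irrefl _)
    -- each chunk has size at most B
    have hchunk : ∀ (m0 : M0) (c : ℕ),
        (T.filter (fun x => φ0 x = m0 ∧ ch x = c)).card ≤ B := by
      intro m0 c
      have h1 : (T.filter (fun x => φ0 x = m0 ∧ ch x = c)).card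
          ≤ (Finset.Ico (c*B) (c*B+B)).card := by
        apply Finset.card_le_card_of_injOn rk
        · intro x hx
          simp only [Finset.coe_filter, Set.mem_setOf_eq] at hx
          have hc : rk x / B = c := hx.2.2
          refine Finset.mem_Ico.mpr ⟨hc ▸ Nat.div_mul_le_self (rk x) B, ?_⟩
          have h6 : rk x / B * B + rk x % B = rk x := Nat.div_add_mod' _ _
          have h7 : rk x % B < B := Nat.mod_lt _ hBpos
          calc rk x = rk x / B * B + rk x % B := h6.symm
            _ < rk x / B * B + B := Nat.add_lt_add_left h7 _
            _ = c * B + B := by rw [hc]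
        · intro x hx x' hx' hrkeq
          simp only [Finset.coe_filter, Set.mem_setOf_eq] at hx hx'
          by_contra hne
          have hone : ord x ≠ ord x' := fun h => hne (hord h)
          rcases hone.lt_or_gt with h | h
          · exact absurd hrkeq (Nat.ne_of_lt
              (hrkmono x hx.1 x' hx'.1 (hx.2.1.trans hx'.2.1.symm) h))
          · exact absurd hrkeq.symm (Nat.ne_of_lt
              (hrkmono x' hx'.1 x hx.1 (hx'.2.1.trans hx.2.1.symm) h))
      simpa using h1
    -- rank is below fiber size
    have hrk_le : ∀ x ∈ T, rk x + 1 ≤ (T.filter (fun y => φ0 y = φ0 x)).card := by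
      intro x hx
      have hsub : T.filter (fun y => φ0 y = φ0 x ∧ ord y < ord x)
          ⊆ (T.filter (fun y => φ0 y = φ0 x)).erase x := by
        intro y hy
        simp only [Finset.mem_filter] at hy
        refine Finset.mem_erase.mpr ⟨?_, Finset.mem_filter.mpr ⟨hy.1, hy.2.1⟩⟩
        intro heq
        exact absurd (heq ▸ hy.2.2) (lt_irrefl _)
      have h1 := Finset.card_le_card hsub
      have h2 : x ∈ T.filter (fun y => φ0 y = φ0 x) := Finset.mem_filter.mpr ⟨hx, rfl⟩
      rw [Finset.card_erase_of_mem h2] at h1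
      have h3 : 1 ≤ (T.filter (fun y => φ0 y = φ0 x)).card := Finset.card_pos.mpr ⟨x, h2⟩
      have h4 : rk x = (T.filter (fun y => φ0 y = φ0 x ∧ ord y < ord x)).card := rfl
      omega
    -- the set of used labels
    set S : Finset (M0 × ℕ) := T.image (fun x => (φ0 x, ch x)) with hSdef
    have hScard : S.card ≤ 3 * m := by
      have h1 : S.card = ∑ m0 : M0, (S.filter (fun p => p.1 = m0)).card :=
        Finset.card_eq_sum_card_fiberwise (fun p _ => Finset.mem_univ _)
      have h2 : ∀ m0 : M0, (S.filter (fun p => p.1 = m0)).card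
          ≤ ((T.filter (fun y => φ0 y = m0)).card - 1) / B
            + min (T.filter (fun y => φ0 y = m0)).card 1 := by
        intro m0
        rcases Finset.eq_empty_or_nonempty (T.filter (fun y => φ0 y = m0)) with he | ⟨y0, hy0⟩
        · have : S.filter (fun p => p.1 = m0) = ∅ := by
            rw [Finset.eq_empty_iff_forall_notMem]
            rintro ⟨m1, c⟩ hp
            simp only [Finset.mem_filter, hSdef, Finset.mem_image] at hp
            obtain ⟨⟨x, hxT, hxe⟩, hm1⟩ := hp
            have hx1 : φ0 x = m0 := by
              have := congrArg Prod.fst hxe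
              simp at this
              rw [this]; exact hm1
            have hmem : x ∈ Finset.filter (fun y => φ0 y = m0) T :=
              Finset.mem_filter.mpr ⟨hxT, hx1⟩
            rw [he] at hmem
            exact absurd hmem (Finset.notMem_empty x)
          simp [this, he]
        · have hmin : min (T.filter (fun y => φ0 y = m0)).card 1 = 1 := by
            have : 1 ≤ (T.filter (fun y => φ0 y = m0)).card := Finset.card_pos.mpr ⟨y0, hy0⟩
            omega
          rw [hmin]
          have hsub : S.filter (fun p => p.1 = m0)
              ⊆ (Finset.range (((T.filter (fun y => φ0 y = m0)).card - 1) / B + 1)).image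
                  (fun c => (m0, c)) := by
            rintro ⟨m1, c⟩ hp
            simp only [Finset.mem_filter, hSdef, Finset.mem_image] at hp
            obtain ⟨⟨x, hxT, hxe⟩, hm1⟩ := hp
            obtain ⟨he1, he2⟩ := Prod.mk.injEq .. ▸ hxe
            simp only [Finset.mem_image, Finset.mem_range]
            refine ⟨c, ?_, by rw [hm1]⟩
            have hx1 : φ0 x = m0 := hm1 ▸ he1
            have h4 := hrk_le x hxT
            rw [hx1] at h4
            have : ch x ≤ ((T.filter (fun y => φ0 y = m0)).card - 1) / B :=
              Nat.div_le_div_right (by omega)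
            omega
          calc (S.filter (fun p => p.1 = m0)).card
              ≤ _ := Finset.card_le_card hsub
            _ ≤ (Finset.range (((T.filter (fun y => φ0 y = m0)).card - 1) / B + 1)).card :=
                Finset.card_image_le
            _ = ((T.filter (fun y => φ0 y = m0)).card - 1) / B + 1 := Finset.card_range _
      have h3 : ∑ m0 : M0, (((T.filter (fun y => φ0 y = m0)).card - 1) / B
          + min (T.filter (fun y => φ0 y = m0)).card 1)
          ≤ (∑ m0 : M0, ((T.filter (fun y => φ0 y = m0)).card - 1)) / B + m := by
        rw [Finset.sum_add_distrib]
        have ha : ∑ m0 : M0, ((T.filter (fun y => φ0 y = m0)).card - 1) / B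
            ≤ (∑ m0 : M0, ((T.filter (fun y => φ0 y = m0)).card - 1)) / B := by
          rw [Nat.le_div_iff_mul_le hBpos, Finset.sum_mul]
          exact Finset.sum_le_sum fun i _ => Nat.div_mul_le_self _ _
        have hb : ∑ m0 : M0, min (T.filter (fun y => φ0 y = m0)).card 1 ≤ m := by
          calc ∑ m0 : M0, min (T.filter (fun y => φ0 y = m0)).card 1
              ≤ ∑ _m0 : M0, 1 := Finset.sum_le_sum fun i _ => min_le_right _ _
            _ = m := by simp [hmdef]
        omega
      have h4 : ∑ m0 : M0, ((T.filter (fun y => φ0 y = m0)).card - 1) ≤ t := by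
        have := Finset.card_eq_sum_card_fiberwise
          (f := φ0) (s := T) (t := Finset.univ) (fun x _ => Finset.mem_univ _)
        calc ∑ m0 : M0, ((T.filter (fun y => φ0 y = m0)).card - 1)
            ≤ ∑ m0 : M0, (T.filter (fun y => φ0 y = m0)).card :=
              Finset.sum_le_sum fun i _ => Nat.sub_le _ _
          _ = t := this.symm
      have h5 : t / B ≤ 2 * m := by
        have hdm : m * B + t % m = t := by rw [hBdef]; exact Nat.div_add_mod t m
        have hr : t % m < m := Nat.mod_lt t hm1
        have h51 : t / B = t % m / B + m := by
          conv_lhs => rw [← hdm, Nat.add_comm (m * B) (t % m), Nat.mul_comm m B]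
          exact Nat.add_mul_div_left _ _ hBpos
        have h52 : t % m / B ≤ t % m := Nat.div_le_self _ _
        omega
      have h6 : (∑ m0 : M0, ((T.filter (fun y => φ0 y = m0)).card - 1)) / B ≤ t / B :=
        Nat.div_le_div_right h4
      calc S.card = _ := h1
        _ ≤ _ := Finset.sum_le_sum fun i _ => h2 i
        _ ≤ _ := h3
        _ ≤ 3 * m := by omega
    have hSk : S.card ≤ 4 * m := by omega
    have hk0 : 0 < 4 * m := by omega
    set e := S.equivFin with hedef
    set φ0' : (Fin n → 𝒳) → Fin (4*m) := fun x =>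
      if h : (φ0 x, ch x) ∈ S then (e ⟨_, h⟩).castLE hSk else ⟨0, hk0⟩ with hφ0'def
    set g : Fin (4*m) → M0 := fun j =>
      if h : (j:ℕ) < S.card then ((e.symm ⟨j, h⟩ : S) : M0 × ℕ).1
      else Classical.arbitrary M0 with hgdef
    set ψ' : Fin (4*m) × M2 → (Fin n → 𝒴) := fun p => ψ (g p.1, p.2) with hψ'def
    have hg : ∀ x ∈ T, g (φ0' x) = φ0 x := by
      intro x hx
      have hmem : (φ0 x, ch x) ∈ S := Finset.mem_image_of_mem _ hx
      simp only [hφ0'def, dif_pos hmem, hgdef]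
      have hlt : (((e ⟨_, hmem⟩).castLE hSk : Fin (4*m)) : ℕ) < S.card :=
        (e ⟨_, hmem⟩).2
      rw [dif_pos hlt]
      have he1 : (⟨(((e ⟨_, hmem⟩).castLE hSk : Fin (4*m)) : ℕ), hlt⟩ : Fin S.card)
          = e ⟨_, hmem⟩ := by ext; simp
      rw [he1, Equiv.symm_apply_apply]
    refine ⟨4 * m, φ0', ψ', ?_, ?_, ?_⟩
    · -- log bound
      have h4m : ((4 * m : ℕ) : ℝ) = 4 * (m : ℝ) := by push_cast; ring
      rw [h4m, Real.logb_mul (by norm_num) (Nat.cast_ne_zero.mpr (by omega)),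
        show Real.logb 2 4 = 2 by
          rw [show (4:ℝ) = 2^(2:ℕ) by norm_num, Real.logb_pow,
            Real.logb_self_eq_one (by norm_num : (1:ℝ) < 2)]; norm_num]
      linarith
    · -- error bound
      have hfe : (jointTypeClass n Q).filter (fun p => ψ' (φ0' p.1, φ2 p.2) ≠ p.2)
          = (jointTypeClass n Q).filter (fun p => ψ (φ0 p.1, φ2 p.2) ≠ p.2) := by
        apply Finset.filter_congr
        intro p hp
        have hre : ψ' (φ0' p.1, φ2 p.2) = ψ (φ0 p.1, φ2 p.2) := by
          show ψ (g (φ0' p.1), φ2 p.2) = ψ (φ0 p.1, φ2 p.2)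
          rw [hg p.1 (marg_mem n Q hp)]
        rw [hre]
      unfold errWAK
      rw [hfe]
    · -- fiber bound
      intro j
      have hBle : (B : ℝ) ≤ (t : ℝ) / (m : ℝ) := by
        rw [hBdef]
        exact Nat.cast_div_le
      rcases Finset.eq_empty_or_nonempty (T.filter (fun x => φ0' x = j)) with he | ⟨x1, hx1⟩
      · rw [he]
        rw [Finset.card_empty, Nat.cast_zero]
        exact div_nonneg (Nat.cast_nonneg _) (Nat.cast_nonneg _)
      · have hx1' := Finset.mem_filter.mp hx1
        have hsub : T.filter (fun x => φ0' x = j)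
            ⊆ T.filter (fun x => φ0 x = φ0 x1 ∧ ch x = ch x1) := by
          intro x hx
          have hx' := Finset.mem_filter.mp hx
          refine Finset.mem_filter.mpr ⟨hx'.1, ?_⟩
          have heq : φ0' x = φ0' x1 := hx'.2.trans hx1'.2.symm
          have hmx : (φ0 x, ch x) ∈ S := Finset.mem_image_of_mem _ hx'.1
          have hmx1 : (φ0 x1, ch x1) ∈ S := Finset.mem_image_of_mem _ hx1'.1
          rw [hφ0'def] at heq
          simp only [dif_pos hmx, dif_pos hmx1] at heq
          have heq2 : e ⟨_, hmx⟩ = e ⟨_, hmx1⟩ :=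
            Fin.castLE_injective hSk heq
          have heq3 : ((⟨_, hmx⟩ : S) : M0 × ℕ) = ((⟨_, hmx1⟩ : S) : M0 × ℕ) :=
            congrArg _ (e.injective heq2)
          simp only [Prod.mk.injEq] at heq3
          exact heq3
        calc ((T.filter (fun x => φ0' x = j)).card : ℝ)
            ≤ ((T.filter (fun x => φ0 x = φ0 x1 ∧ ch x = ch x1)).card : ℝ) := by
              exact_mod_cast Finset.card_le_card hsub
          _ ≤ (B : ℝ) := by exact_mod_cast hchunk (φ0 x1) (ch x1)
          _ ≤ _ := hBle
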